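/- With K, S as above and L = [K*, SK*], a pair (f,g) ∈ ℂ^{V₀} ⊕ ℂ^{V₀} satisfies K*f + SK*g = 0 if and only if Df + Tg = 0 and Tf + Dg = 0, where D = KK* and T = KSK*; equivalently ker L = ker(I − E_G²) where E_G = [[0,−I],[2D−I,2T]]. -/

import Mathlib

open Matrix

variable {V : Type*} [Fintype V] [DecidableEq V]

/-- The symmetric arc set of a simple graph: ordered pairs of adjacent vertices. -/
abbrev SimpleGraph.Arc (G : SimpleGraph V) [DecidableRel G.Adj] :=
  {p : V × V // G.Adj p.1 p.2}

/-- The weighted terminal-incidence matrix `K`, `K_{u,a} = 1/√(d̃ u)` if `t(a) = u`. -/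
noncomputable def Kmat (G : SimpleGraph V) [DecidableRel G.Adj] (dt : V → ℕ) :
    Matrix V G.Arc ℝ :=
  fun u a => if a.1.2 = u then 1 / Real.sqrt (dt u) else 0

/-- The arc-reversal matrix `S`, `(S ψ)(a) = ψ(ā)`. -/
def Smat (G : SimpleGraph V) [DecidableRel G.Adj] : Matrix G.Arc G.Arc ℝ :=
  fun a b => if b.1 = (a.1.2, a.1.1) then 1 else 0

/-- The diagonal matrix `D` with entries `d(u)/d̃(u)`. -/
noncomputable def Dmat (G : SimpleGraph V) [DecidableRel G.Adj] (dt : V → ℕ) :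
    Matrix V V ℝ :=
  Matrix.diagonal fun u => (G.degree u : ℝ) / (dt u)

/-- The Dirichlet random-walk matrix `T`, `T_{u,v} = 1/√(d̃(u) d̃(v))` for `u ~ v`. -/
noncomputable def Tmat (G : SimpleGraph V) [DecidableRel G.Adj] (dt : V → ℕ) :
    Matrix V V ℝ :=
  fun u v => if G.Adj u v then 1 / Real.sqrt ((dt u : ℝ) * (dt v : ℝ)) else 0
lemma Kt_apply (G : SimpleGraph V) [DecidableRel G.Adj] (dt : V → ℕ) (f : V → ℝ) (a : G.Arc) :
    ((Kmat G dt).transpose.mulVec f) a = f a.1.2 / Real.sqrt (dt a.1.2) := by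
  simp [Matrix.mulVec, dotProduct, Kmat, Matrix.transpose_apply, ite_mul, div_mul_eq_mul_div,
    Finset.sum_ite_eq, mul_comm, div_eq_mul_inv]

lemma SKt_apply (G : SimpleGraph V) [DecidableRel G.Adj] (dt : V → ℕ) (g : V → ℝ) (a : G.Arc) :
    ((Smat G * (Kmat G dt).transpose).mulVec g) a = g a.1.1 / Real.sqrt (dt a.1.1) := by
  rw [← Matrix.mulVec_mulVec]
  have hr : ∀ b : G.Arc, (b.1 = (a.1.2, a.1.1)) ↔ b = (⟨(a.1.2, a.1.1), a.2.symm⟩ : G.Arc) := by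
    intro b; rw [Subtype.ext_iff]
  simp only [Matrix.mulVec, dotProduct, Smat, hr, ite_mul, one_mul, zero_mul,
    Finset.sum_ite_eq', Finset.mem_univ, if_true]
  exact Kt_apply G dt g ⟨((a.1).2, (a.1).1), a.2.symm⟩

lemma Tmul_apply (G : SimpleGraph V) [DecidableRel G.Adj] (dt : V → ℕ) (g : V → ℝ) (u : V) :
    ((Tmat G dt).mulVec g) u = ∑ v ∈ G.neighborFinset u, g v / Real.sqrt ((dt u : ℝ) * (dt v : ℝ)) := by
  simp [Matrix.mulVec, dotProduct, Tmat, SimpleGraph.neighborFinset_eq_filter,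
    Finset.sum_filter, ite_mul, div_mul_eq_mul_div, mul_comm, div_eq_mul_inv, mul_inv]

lemma Dmul_apply (G : SimpleGraph V) [DecidableRel G.Adj] (dt : V → ℕ) (f : V → ℝ) (u : V) :
    ((Dmat G dt).mulVec f) u = (G.degree u : ℝ) / (dt u) * f u := by
  simp [Dmat, Matrix.mulVec_diagonal]

lemma arith_fwd {a b x y : ℝ} (hx : 0 < x) (hy : 0 < y)
    (h : a / Real.sqrt y + b / Real.sqrt x = 0) :
    b / x + a / Real.sqrt (x * y) = 0 := by
  have hsx := Real.sqrt_pos.2 hx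
  have hsy := Real.sqrt_pos.2 hy
  have hxx : Real.sqrt x * Real.sqrt x = x := Real.mul_self_sqrt hx.le
  rw [Real.sqrt_mul hx.le, ← hxx]
  field_simp at h ⊢
  linear_combination Real.sqrt x * h + Real.sqrt y * b * Real.sqrt_sq hsx.le

lemma degpos {G : SimpleGraph V} [DecidableRel G.Adj] {dt : V → ℕ}
    (hle : ∀ u, G.degree u ≤ dt u) {u v : V} (h : G.Adj u v) : (0:ℝ) < (dt u : ℝ) := by
  have h1 : 0 < G.degree u :=
    Finset.card_pos.2 ⟨v, (SimpleGraph.mem_neighborFinset G u v).2 h⟩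
  have := lt_of_lt_of_le h1 (hle u)
  exact_mod_cast this

/-- forward: arc relations imply D f + T g = 0 pointwise -/
lemma fwd (G : SimpleGraph V) [DecidableRel G.Adj] (dt : V → ℕ)
    (hle : ∀ u, G.degree u ≤ dt u) (f g : V → ℝ)
    (harc : ∀ x y, G.Adj x y → f y / Real.sqrt (dt y) + g x / Real.sqrt (dt x) = 0) (u : V) :
    (G.degree u : ℝ) / (dt u) * f u + ∑ v ∈ G.neighborFinset u,
      g v / Real.sqrt ((dt u : ℝ) * (dt v : ℝ)) = 0 := by
  have hdeg : (G.degree u : ℝ) / (dt u) * f u = ∑ v ∈ G.neighborFinset u, f u / (dt u : ℝ) := by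
    rw [Finset.sum_const, SimpleGraph.card_neighborFinset_eq_degree, nsmul_eq_mul]
    ring
  rw [hdeg, ← Finset.sum_add_distrib]
  refine Finset.sum_eq_zero fun v hv => ?_
  rw [SimpleGraph.mem_neighborFinset] at hv
  exact arith_fwd (degpos hle hv) (degpos hle hv.symm) (by linarith [harc v u hv.symm])

lemma swap_sum (G : SimpleGraph V) [DecidableRel G.Adj] (F : V → ℝ) :
    ∑ u : V, ∑ v ∈ G.neighborFinset u, F v = ∑ u : V, ∑ v ∈ G.neighborFinset u, F u := by
  rw [Finset.sum_comm' (t' := Finset.univ) (s' := fun v => G.neighborFinset v)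
    (by intro x y; simp [SimpleGraph.mem_neighborFinset, G.adj_comm])]

/-- If `deg u * c u + ε * ∑_{v ~ u} c v = 0` for all `u` (ε = ±1), then
`c u + ε * c v = 0` on edges. -/
lemma quad_form (G : SimpleGraph V) [DecidableRel G.Adj] (c : V → ℝ) (ε : ℝ) (hε : ε * ε = 1)
    (h : ∀ u, (G.degree u : ℝ) * c u + ε * ∑ v ∈ G.neighborFinset u, c v = 0)
    {x y : V} (hxy : G.Adj x y) : c x + ε * c y = 0 := by
  have hterm : ∀ u, ∑ v ∈ G.neighborFinset u, (c u + ε * c v)^2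
      = 2 * (c u * ((G.degree u : ℝ) * c u + ε * ∑ v ∈ G.neighborFinset u, c v))
        + (∑ v ∈ G.neighborFinset u, c v ^ 2 - (G.degree u : ℝ) * c u ^ 2) := by
    intro u
    have : ∀ v ∈ G.neighborFinset u, (c u + ε * c v)^2
        = (2 * (c u * c u) - c u ^2) + (2 * (c u * (ε * c v)) + c v ^ 2) := by
      intro v _; nlinarith [hε]
    rw [Finset.sum_congr rfl this, Finset.sum_add_distrib, Finset.sum_add_distrib,
      Finset.sum_const, SimpleGraph.card_neighborFinset_eq_degree, nsmul_eq_mul,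
      show ∑ x ∈ G.neighborFinset u, 2 * (c u * (ε * c x))
          = 2 * (c u * (ε * ∑ x ∈ G.neighborFinset u, c x)) by
        rw [Finset.mul_sum, Finset.mul_sum, Finset.mul_sum]]
    ring
  have htot : ∑ u : V, ∑ v ∈ G.neighborFinset u, (c u + ε * c v)^2 = 0 := by
    rw [Finset.sum_congr rfl (fun u _ => hterm u), Finset.sum_add_distrib,
      Finset.sum_sub_distrib, swap_sum G (fun v => c v ^ 2)]
    simp [h]
  have hnn : ∀ u ∈ Finset.univ (α := V), (0:ℝ) ≤ ∑ v ∈ G.neighborFinset u, (c u + ε * c v)^2 :=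
    fun u _ => Finset.sum_nonneg fun v _ => sq_nonneg _
  have h1 := (Finset.sum_eq_zero_iff_of_nonneg hnn).1 htot x (Finset.mem_univ x)
  have h2 := (Finset.sum_eq_zero_iff_of_nonneg (fun v _ => sq_nonneg (c x + ε * c v))).1 h1 y
    ((SimpleGraph.mem_neighborFinset G x y).2 hxy)
  exact pow_eq_zero_iff (n := 2) (by norm_num) |>.1 h2

lemma ar1 {x : ℝ} (hx : 0 < x) (d c : ℝ) :
    Real.sqrt x * (d / x * c) = d * (c / Real.sqrt x) := by
  have hs := (Real.sqrt_pos.2 hx).ne'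
  have hxx : Real.sqrt x * Real.sqrt x = x := Real.mul_self_sqrt hx.le
  field_simp
  linear_combination d * c * hxx

lemma ar2 {x y : ℝ} (hx : 0 < x) (hy : 0 < y) (c : ℝ) :
    Real.sqrt x * (c / Real.sqrt (x * y)) = c / Real.sqrt y := by
  rw [Real.sqrt_mul hx.le]
  have hsx := (Real.sqrt_pos.2 hx).ne'
  have hsy := (Real.sqrt_pos.2 hy).ne'
  field_simp

lemma bwd (G : SimpleGraph V) [DecidableRel G.Adj] (dt : V → ℕ)
    (hle : ∀ u, G.degree u ≤ dt u) (f g : V → ℝ)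
    (h1 : ∀ u, (G.degree u : ℝ) / (dt u) * f u + ∑ v ∈ G.neighborFinset u,
      g v / Real.sqrt ((dt u : ℝ) * (dt v : ℝ)) = 0)
    (h2 : ∀ u, (∑ v ∈ G.neighborFinset u,
      f v / Real.sqrt ((dt u : ℝ) * (dt v : ℝ))) + (G.degree u : ℝ) / (dt u) * g u = 0) :
    ∀ x y, G.Adj x y → f y / Real.sqrt (dt y) + g x / Real.sqrt (dt x) = 0 := by
  set φ : V → ℝ := fun u => f u / Real.sqrt (dt u) with hφ
  set ψ : V → ℝ := fun u => g u / Real.sqrt (dt u) with hψ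
  have key : ∀ (F G' : V → ℝ),
      (∀ u, (G.degree u : ℝ) / (dt u) * F u + ∑ v ∈ G.neighborFinset u,
        G' v / Real.sqrt ((dt u : ℝ) * (dt v : ℝ)) = 0) →
      ∀ u, (G.degree u : ℝ) * (F u / Real.sqrt (dt u))
        + ∑ v ∈ G.neighborFinset u, G' v / Real.sqrt (dt v) = 0 := by
    intro F G' h u
    by_cases hd : G.degree u = 0
    · have hne : G.neighborFinset u = ∅ := Finset.card_eq_zero.1 hd
      simp [hd, hne]
    · have hdu : (0:ℝ) < (dt u : ℝ) := by
        have := lt_of_lt_of_le (Nat.pos_of_ne_zero hd) (hle u)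
        exact_mod_cast this
      have : (G.degree u : ℝ) * (F u / Real.sqrt (dt u))
          + ∑ v ∈ G.neighborFinset u, G' v / Real.sqrt (dt v)
          = Real.sqrt (dt u) * ((G.degree u : ℝ) / (dt u) * F u
            + ∑ v ∈ G.neighborFinset u, G' v / Real.sqrt ((dt u : ℝ) * (dt v : ℝ))) := by
        rw [mul_add, Finset.mul_sum, ar1 hdu]
        congr 1
        refine Finset.sum_congr rfl fun v hv => ?_
        rw [SimpleGraph.mem_neighborFinset] at hv
        exact (ar2 hdu (degpos hle hv.symm) (G' v)).symm
      rw [this, h u, mul_zero]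
  have hP : ∀ u, (G.degree u : ℝ) * φ u + ∑ v ∈ G.neighborFinset u, ψ v = 0 :=
    key f g h1
  have hQ : ∀ u, (G.degree u : ℝ) * ψ u + ∑ v ∈ G.neighborFinset u, φ v = 0 := by
    refine key g f fun u => ?_
    linarith [h2 u]
  have ha : ∀ x y, G.Adj x y → (φ x + ψ x) + 1 * (φ y + ψ y) = 0 := by
    intro x y hxy
    refine quad_form G (fun u => φ u + ψ u) 1 (by norm_num) (fun u => ?_) hxy
    beta_reduce
    rw [one_mul, Finset.sum_add_distrib]
    linarith [hP u, hQ u]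
  have hb : ∀ x y, G.Adj x y → (φ x - ψ x) + (-1) * (φ y - ψ y) = 0 := by
    intro x y hxy
    refine quad_form G (fun u => φ u - ψ u) (-1) (by norm_num) (fun u => ?_) hxy
    beta_reduce
    rw [Finset.sum_sub_distrib]
    linarith [hP u, hQ u]
  intro x y hxy
  have h3 := ha x y hxy
  have h4 := hb x y hxy
  show φ y + ψ x = 0
  linarith

lemma part1 (G : SimpleGraph V) [DecidableRel G.Adj] (dt : V → ℕ)
    (hle : ∀ u, G.degree u ≤ dt u) (f g : V → ℝ) :
    (Kmat G dt).transpose.mulVec f + (Smat G * (Kmat G dt).transpose).mulVec g = 0 ↔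
      (Dmat G dt).mulVec f + (Tmat G dt).mulVec g = 0 ∧
      (Tmat G dt).mulVec f + (Dmat G dt).mulVec g = 0 := by
  constructor
  · intro h
    have harc : ∀ x y, G.Adj x y →
        f y / Real.sqrt (dt y) + g x / Real.sqrt (dt x) = 0 := by
      intro x y hxy
      have := congrFun h ⟨(x, y), hxy⟩
      simpa [Kt_apply, SKt_apply] using this
    have harc' : ∀ x y, G.Adj x y →
        g y / Real.sqrt (dt y) + f x / Real.sqrt (dt x) = 0 := by
      intro x y hxy; linarith [harc y x hxy.symm]
    constructor
    · funext u
      rw [Pi.add_apply, Dmul_apply, Tmul_apply, Pi.zero_apply]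
      exact fwd G dt hle f g harc u
    · funext u
      rw [Pi.add_apply, Dmul_apply, Tmul_apply, Pi.zero_apply]
      linarith [fwd G dt hle g f harc' u]
  · rintro ⟨hA, hB⟩
    have h1 : ∀ u, (G.degree u : ℝ) / (dt u) * f u + ∑ v ∈ G.neighborFinset u,
        g v / Real.sqrt ((dt u : ℝ) * (dt v : ℝ)) = 0 := by
      intro u
      have := congrFun hA u
      rw [Pi.add_apply, Dmul_apply, Tmul_apply, Pi.zero_apply] at this
      exact this
    have h2 : ∀ u, (∑ v ∈ G.neighborFinset u,
        f v / Real.sqrt ((dt u : ℝ) * (dt v : ℝ))) + (G.degree u : ℝ) / (dt u) * g u = 0 := by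
      intro u
      have := congrFun hB u
      rw [Pi.add_apply, Dmul_apply, Tmul_apply, Pi.zero_apply] at this
      linarith [this]
    have harc := bwd G dt hle f g h1 h2
    funext a
    rw [Pi.add_apply, Kt_apply, SKt_apply, Pi.zero_apply]
    exact harc a.1.1 a.1.2 a.2

lemma fromBlocks_sub' {α : Type*} [Sub α] {l m n o : Type*}
    (A : Matrix n l α) (B : Matrix n m α) (C : Matrix o l α) (D : Matrix o m α)
    (A' : Matrix n l α) (B' : Matrix n m α) (C' : Matrix o l α) (D' : Matrix o m α) :
    fromBlocks A B C D - fromBlocks A' B' C' D'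
      = fromBlocks (A - A') (B - B') (C - C') (D - D') := by
  ext (i | i) (j | j) <;> rfl

lemma blocks_identity (D T : Matrix V V ℝ) :
    (1 : Matrix (V ⊕ V) (V ⊕ V) ℝ) -
        Matrix.fromBlocks 0 (-1) ((2 : ℝ) • D - 1) ((2 : ℝ) • T) *
          Matrix.fromBlocks 0 (-1) ((2 : ℝ) • D - 1) ((2 : ℝ) • T)
      = Matrix.fromBlocks ((2:ℝ) • D) ((2:ℝ) • T)
          ((2:ℝ) • T - (4:ℝ) • (T * D)) ((2:ℝ) • D - (4:ℝ) • (T * T)) := by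
  have h11 : (1 : Matrix V V ℝ) - ((0 : Matrix V V ℝ) * 0 + (-1) * ((2:ℝ) • D - 1))
      = (2:ℝ) • D := by
    simp only [Matrix.mul_zero, Matrix.neg_mul, Matrix.one_mul, smul_smul]
    module
  have h12 : (0 : Matrix V V ℝ) - ((0 : Matrix V V ℝ) * (-1) + (-1) * ((2:ℝ) • T))
      = (2:ℝ) • T := by
    simp only [Matrix.zero_mul, Matrix.neg_mul, Matrix.one_mul]
    module
  have h21 : (0 : Matrix V V ℝ) - (((2:ℝ) • D - 1) * 0 + ((2:ℝ) • T) * ((2:ℝ) • D - 1))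
      = (2:ℝ) • T - (4:ℝ) • (T * D) := by
    simp only [Matrix.mul_zero, smul_mul_assoc, mul_smul_comm, Matrix.mul_one,
      Matrix.mul_sub, smul_smul]
    module
  have h22 : (1 : Matrix V V ℝ) - (((2:ℝ) • D - 1) * (-1) + ((2:ℝ) • T) * ((2:ℝ) • T))
      = (2:ℝ) • D - (4:ℝ) • (T * T) := by
    simp only [Matrix.mul_neg, smul_mul_assoc, mul_smul_comm, Matrix.mul_one, smul_smul]
    module
  rw [fromBlocks_multiply, ← fromBlocks_one (l := V) (m := V), fromBlocks_sub',
    h11, h12, h21, h22]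

lemma sum_elim_eq_zero {p q : V → ℝ} : Sum.elim p q = 0 ↔ p = 0 ∧ q = 0 := by
  constructor
  · intro h
    exact ⟨funext fun i => congrFun h (Sum.inl i), funext fun i => congrFun h (Sum.inr i)⟩
  · rintro ⟨rfl, rfl⟩
    funext i; cases i <;> rfl

/-- `Kᵀ f + S Kᵀ g = 0` iff `D f + T g = 0` and `T f + D g = 0`; equivalently
`ker L = ker (1 − E_G²)` where `L = [Kᵀ, SKᵀ]` and `E_G = [[0,−1],[2D−1,2T]]`. -/
theorem ker_L_characterization (G : SimpleGraph V) [DecidableRel G.Adj] (dt : V → ℕ)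
    (hconn : G.Connected) (hle : ∀ u, G.degree u ≤ dt u) (hbd : ∃ u, G.degree u < dt u) :
    (∀ f g : V → ℝ,
      (Kmat G dt).transpose.mulVec f + (Smat G * (Kmat G dt).transpose).mulVec g = 0 ↔
        (Dmat G dt).mulVec f + (Tmat G dt).mulVec g = 0 ∧
        (Tmat G dt).mulVec f + (Dmat G dt).mulVec g = 0) ∧
    LinearMap.ker (Matrix.mulVecLin
        (Matrix.fromCols (Kmat G dt).transpose (Smat G * (Kmat G dt).transpose)))
      = LinearMap.ker (Matrix.mulVecLin
          ((1 : Matrix (V ⊕ V) (V ⊕ V) ℝ) - Matrix.fromBlocks 0 (-1) ((2 : ℝ) • Dmat G dt - 1) ((2 : ℝ) • Tmat G dt) *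
            Matrix.fromBlocks 0 (-1) ((2 : ℝ) • Dmat G dt - 1) ((2 : ℝ) • Tmat G dt))) := by
  have hmain := part1 G dt hle
  refine ⟨hmain, ?_⟩
  ext x
  simp only [LinearMap.mem_ker, Matrix.mulVecLin_apply]
  have hx : x = Sum.elim (x ∘ Sum.inl) (x ∘ Sum.inr) := by funext i; cases i <;> rfl
  set f := x ∘ Sum.inl with hf
  set g := x ∘ Sum.inr with hg
  rw [blocks_identity, hx, fromCols_mulVec_sumElim, fromBlocks_mulVec]
  simp only [Sum.elim_comp_inl, Sum.elim_comp_inr]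
  rw [hmain f g, sum_elim_eq_zero]
  have e1 : ((2:ℝ) • Dmat G dt) *ᵥ f + ((2:ℝ) • Tmat G dt) *ᵥ g
      = (2:ℝ) • ((Dmat G dt) *ᵥ f + (Tmat G dt) *ᵥ g) := by
    rw [smul_mulVec, smul_mulVec, smul_add]
  have e2 : ((2:ℝ) • Tmat G dt - (4:ℝ) • (Tmat G dt * Dmat G dt)) *ᵥ f
      + ((2:ℝ) • Dmat G dt - (4:ℝ) • (Tmat G dt * Tmat G dt)) *ᵥ g
      = (2:ℝ) • ((Tmat G dt) *ᵥ f + (Dmat G dt) *ᵥ g)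
        - (4:ℝ) • ((Tmat G dt) *ᵥ ((Dmat G dt) *ᵥ f + (Tmat G dt) *ᵥ g)) := by
    rw [sub_mulVec, sub_mulVec, smul_mulVec, smul_mulVec, smul_mulVec,
      smul_mulVec, mulVec_add, ← mulVec_mulVec, ← mulVec_mulVec, smul_add]
    module
  rw [e1, e2]
  constructor
  · rintro ⟨h1, h2⟩
    rw [h1, h2]
    simp
  · rintro ⟨h1, h2⟩
    have hu : (Dmat G dt) *ᵥ f + (Tmat G dt) *ᵥ g = 0 :=
      (smul_eq_zero.mp h1).resolve_left (by norm_num)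
    refine ⟨hu, ?_⟩
    rw [hu, Matrix.mulVec_zero, smul_zero, sub_zero] at h2
    exact (smul_eq_zero.mp h2).resolve_left (by norm_num)
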